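/- arXiv:1808.05667 — 2 statements merged into one kernel-verified Lean document; each statement's English description precedes it below -/
import Mathlib

section
/- Let X and Z be real Banach spaces, A : X → Z a continuous linear operator, and F : X → Z a continuously Fréchet differentiable (C¹) map. Let S = {u ∈ X : A u = F(u)}. If S is compact and for every u ∈ S the operator A − DF(u) : X → Z is bijective with continuous inverse, then S is a finite set. -/
/-- If the solution set `S = {u : A u = F u}` is compact and at every `u ∈ S` the
linearization `A − DF(u)` is bijective with continuous inverse, then `S` is finite. -/
theorem solution_set_finite_of_invertible_linearizations
    {X Z : Type*} [NormedAddCommGroup X] [NormedSpace ℝ X] [CompleteSpace X]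
    [NormedAddCommGroup Z] [NormedSpace ℝ Z] [CompleteSpace Z]
    (A : X →L[ℝ] Z) (F : X → Z) (hF : ContDiff ℝ 1 F)
    (hcpt : IsCompact {u : X | A u = F u})
    (hinv : ∀ u ∈ {u : X | A u = F u}, ∃ G : Z →L[ℝ] X,
      (∀ x : X, G ((A - fderiv ℝ F u) x) = x) ∧
      (∀ z : Z, (A - fderiv ℝ F u) (G z) = z)) :
    {u : X | A u = F u}.Finite := by
  set S := {u : X | A u = F u} with hS
  refine hcpt.finite ?_
  rw [isDiscrete_iff_nhdsNE]
  intro u hu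
  rw [Filter.inf_principal_eq_bot]
  obtain ⟨G, hG1, hG2⟩ := hinv u hu
  set e : X ≃L[ℝ] Z := ContinuousLinearEquiv.equivOfInverse (A - fderiv ℝ F u) G hG1 hG2
  have hF' : HasStrictFDerivAt F (fderiv ℝ F u) u :=
    (hF.contDiffAt).hasStrictFDerivAt one_ne_zero
  have hf : HasStrictFDerivAt (fun x => A x - F x) (e : X →L[ℝ] Z) u := by
    have := (A.hasStrictFDerivAt (x := u)).sub hF'
    exact this
  have hsrc : (hf.toOpenPartialHomeomorph _).source ∈ nhds u :=
    (hf.toOpenPartialHomeomorph _).open_source.mem_nhds hf.mem_toOpenPartialHomeomorph_source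
  have hinj := (hf.toOpenPartialHomeomorph _).injOn
  filter_upwards [self_mem_nhdsWithin, nhdsWithin_le_nhds hsrc] with y hy hysrc
  intro hyS
  refine hy (hinj hysrc hf.mem_toOpenPartialHomeomorph_source ?_)
  show A y - F y = A u - F u
  rw [hyS, hu]
  simp
end

section
/- Let X and Z be real Banach spaces, A : X → Z a continuous linear operator, u₀ ∈ X, and let F₀ and Fₙ (n ∈ ℕ) be continuously Fréchet differentiable (C¹) maps X → Z with A u₀ = F₀(u₀). Assume: (i) there exists C > 0 such that for every n the operator Lₙ := A − DFₙ(u₀) : X → Z is bijective with ‖Lₙ⁻¹ z‖ ≤ C‖z‖ for all z ∈ Z; (ii) there exists δ̃ > 0 such that for every n and all u, v with ‖u − u₀‖ ≤ δ̃ and ‖v − u₀‖ ≤ δ̃ one has ‖Fₙ(u) − Fₙ(v) − DFₙ(u₀)(u − v)‖ ≤ (1/(2C))‖u − v‖; (iii) Lₙ⁻¹(Fₙ(u₀) − DFₙ(u₀)u₀) → u₀ in X as n → ∞. Then there exist δ > 0 and N ∈ ℕ such that for every n ≥ N the equation A u = Fₙ(u) has exactly one solution uₙ* in the closed ball {u ∈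 X : ‖u − u₀‖ ≤ δ}, and moreover uₙ* → u₀ in X as n → ∞. -/
open Filter

/-- Lower semicontinuity at a nondegenerate solution: if `A u₀ = F₀ u₀`, the linearized
operators `Lₙ = A − DFₙ(u₀)` are uniformly invertible (i), the nonlinearities satisfy a
uniform tangency estimate near `u₀` (ii), and `Lₙ⁻¹(Fₙ(u₀) − DFₙ(u₀)u₀) → u₀` (iii), then
for some `δ > 0` and all large `n` the equation `A u = Fₙ(u)` has exactly one solution
`uₙ*` with `‖uₙ* − u₀‖ ≤ δ`, and `uₙ* → u₀`. -/
theorem perturbed_solutions_near_nondegenerate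
    {X Z : Type*} [NormedAddCommGroup X] [NormedSpace ℝ X] [CompleteSpace X]
    [NormedAddCommGroup Z] [NormedSpace ℝ Z] [CompleteSpace Z]
    (A : X →L[ℝ] Z) (u₀ : X) (F₀ : X → Z) (F : ℕ → X → Z)
    (hF₀ : ContDiff ℝ 1 F₀) (hF : ∀ n, ContDiff ℝ 1 (F n))
    (h₀ : A u₀ = F₀ u₀)
    (C : ℝ) (hC : 0 < C) (Linv : ℕ → Z →L[ℝ] X)
    (hLl : ∀ n, ∀ x : X, Linv n ((A - fderiv ℝ (F n) u₀) x) = x)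
    (hLr : ∀ n, ∀ z : Z, (A - fderiv ℝ (F n) u₀) (Linv n z) = z)
    (hLnorm : ∀ n, ∀ z : Z, ‖Linv n z‖ ≤ C * ‖z‖)
    (δt : ℝ) (hδt : 0 < δt)
    (hii : ∀ n, ∀ u v : X, ‖u - u₀‖ ≤ δt → ‖v - u₀‖ ≤ δt →
      ‖F n u - F n v - (fderiv ℝ (F n) u₀) (u - v)‖ ≤ (1 / (2 * C)) * ‖u - v‖)
    (hiii : Tendsto (fun n => Linv n (F n u₀ - (fderiv ℝ (F n) u₀) u₀))
      atTop (nhds u₀)) :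
    ∃ δ : ℝ, 0 < δ ∧ ∃ N : ℕ, ∃ usol : ℕ → X,
      (∀ n ≥ N, ‖usol n - u₀‖ ≤ δ ∧ A (usol n) = F n (usol n) ∧
        ∀ v : X, ‖v - u₀‖ ≤ δ → A v = F n v → v = usol n) ∧
      Tendsto usol atTop (nhds u₀) := by
  classical
  set g : ℕ → X → X := fun n u => Linv n (F n u - (fderiv ℝ (F n) u₀) u) with hg
  -- fixed points of g n are exactly solutions of A u = F n u
  have hfix : ∀ n (u : X), g n u = u ↔ A u = F n u := by
    intro n u
    constructor
    · intro h
      have h2 : (A - fderiv ℝ (F n) u₀) (g n u)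
          = F n u - (fderiv ℝ (F n) u₀) u := hLr n _
      rw [h, ContinuousLinearMap.sub_apply] at h2
      exact sub_left_inj.mp h2
    · intro h
      have h2 : g n u = Linv n ((A - fderiv ℝ (F n) u₀) u) := by
        simp [hg, ContinuousLinearMap.sub_apply, h]
      rw [h2, hLl]
  -- contraction estimate
  have hcontr : ∀ n (u v : X), ‖u - u₀‖ ≤ δt → ‖v - u₀‖ ≤ δt →
      ‖g n u - g n v‖ ≤ (1 / 2) * ‖u - v‖ := by
    intro n u v hu hv
    have e : g n u - g n v
        = Linv n (F n u - F n v - (fderiv ℝ (F n) u₀) (u - v)) := by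
      simp only [hg, ← map_sub]
      congr 1
      rw [map_sub]
      abel
    rw [e]
    calc ‖Linv n (F n u - F n v - (fderiv ℝ (F n) u₀) (u - v))‖
        ≤ C * ‖F n u - F n v - (fderiv ℝ (F n) u₀) (u - v)‖ := hLnorm n _
      _ ≤ C * ((1 / (2 * C)) * ‖u - v‖) :=
          mul_le_mul_of_nonneg_left (hii n u v hu hv) hC.le
      _ = (1 / 2) * ‖u - v‖ := by field_simp
  -- key existence/uniqueness lemma for n with small defect
  have key : ∀ n, ‖g n u₀ - u₀‖ ≤ δt / 2 →
      ∃ u : X, ‖u - u₀‖ ≤ δt ∧ g n u = u ∧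
        (∀ v : X, ‖v - u₀‖ ≤ δt → g n v = v → v = u) ∧
        ‖u - u₀‖ ≤ 2 * ‖g n u₀ - u₀‖ := by
    intro n hn
    have maps : ∀ u : X, ‖u - u₀‖ ≤ δt → ‖g n u - u₀‖ ≤ δt := by
      intro u hu
      calc ‖g n u - u₀‖ ≤ ‖g n u - g n u₀‖ + ‖g n u₀ - u₀‖ :=
            norm_sub_le_norm_sub_add_norm_sub _ _ _
        _ ≤ (1 / 2) * ‖u - u₀‖ + δt / 2 := by
            have := hcontr n u u₀ hu (by simpa using hδt.le)
            linarith
        _ ≤ δt := by linarith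
    set s : Set X := Metric.closedBall u₀ δt with hs
    have hmem : ∀ u : X, u ∈ s ↔ ‖u - u₀‖ ≤ δt := by
      intro u; rw [hs, Metric.mem_closedBall, dist_eq_norm]
    haveI : CompleteSpace s :=
      (Metric.isClosed_closedBall).isComplete.completeSpace_coe
    haveI : Nonempty s := ⟨⟨u₀, by rw [hmem]; simpa using hδt.le⟩⟩
    set φ : s → s := fun u => ⟨g n u, (hmem _).mpr (maps u ((hmem _).mp u.2))⟩
      with hφ
    have hcw : ContractingWith (1 / 2 : NNReal) φ := by
      constructor
      · rw [← NNReal.coe_lt_coe]; norm_num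
      · apply LipschitzWith.of_dist_le_mul
        intro x y
        have := hcontr n x y ((hmem _).mp x.2) ((hmem _).mp y.2)
        simpa [hφ, Subtype.dist_eq, dist_eq_norm] using this
    set u : s := ContractingWith.fixedPoint φ hcw with hu
    have hfixu : g n (u : X) = (u : X) := by
      have h := hcw.fixedPoint_isFixedPt
      exact congrArg Subtype.val h
    have huball : ‖(u : X) - u₀‖ ≤ δt := (hmem _).mp u.2
    have hbound : ‖(u : X) - u₀‖ ≤ 2 * ‖g n u₀ - u₀‖ := by
      have h1 : ‖(u : X) - u₀‖ ≤ ‖g n (u : X) - g n u₀‖ + ‖g n u₀ - u₀‖ := by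
        calc ‖(u : X) - u₀‖ = ‖g n (u : X) - u₀‖ := by rw [hfixu]
          _ ≤ ‖g n (u : X) - g n u₀‖ + ‖g n u₀ - u₀‖ :=
              norm_sub_le_norm_sub_add_norm_sub _ _ _
      have h2 := hcontr n (u : X) u₀ huball (by simpa using hδt.le)
      linarith
    refine ⟨u, huball, hfixu, ?_, hbound⟩
    intro v hv hvfix
    have h2 := hcontr n v (u : X) hv huball
    rw [hvfix, hfixu] at h2
    have : ‖v - (u : X)‖ ≤ 0 := by linarith
    have : v - (u : X) = 0 := norm_le_zero_iff.mp this
    exact sub_eq_zero.mp this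
  -- choose N so that the defect is small
  have hdef : Tendsto (fun n => ‖g n u₀ - u₀‖) atTop (nhds 0) := by
    have := tendsto_iff_norm_sub_tendsto_zero.mp hiii
    simpa [hg] using this
  obtain ⟨N, hN⟩ := (Metric.tendsto_atTop.mp hdef (δt / 2) (by linarith)).imp
    (fun N h => h)
  have hNsmall : ∀ n ≥ N, ‖g n u₀ - u₀‖ ≤ δt / 2 := by
    intro n hn
    have := hN n hn
    rw [Real.dist_eq] at this
    have h2 : |‖g n u₀ - u₀‖ - 0| = ‖g n u₀ - u₀‖ := by
      simp [abs_of_nonneg (norm_nonneg _)]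
    rw [h2] at this
    linarith
  -- define the solution sequence
  set usol : ℕ → X := fun n =>
    if h : ‖g n u₀ - u₀‖ ≤ δt / 2 then (key n h).choose else u₀ with husol
  refine ⟨δt, hδt, N, usol, ?_, ?_⟩
  · intro n hn
    have hsm := hNsmall n hn
    have hspec := (key n hsm).choose_spec
    have he : usol n = (key n hsm).choose := by
      rw [husol]; simp [hsm]
    rw [he]
    exact ⟨hspec.1, (hfix n _).mp hspec.2.1,
      fun v hv hAv => hspec.2.2.1 v hv ((hfix n v).mpr hAv)⟩
  · rw [tendsto_iff_norm_sub_tendsto_zero]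
    apply squeeze_zero' (Eventually.of_forall fun n => norm_nonneg _)
    · filter_upwards [eventually_ge_atTop N] with n hn
      have hsm := hNsmall n hn
      have hspec := (key n hsm).choose_spec
      have he : usol n = (key n hsm).choose := by
        rw [husol]; simp [hsm]
      rw [he]
      exact hspec.2.2.2
    · have := hdef.const_mul (2 : ℝ)
      simpa using this
end
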